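/- Commutator expansion with remainder bound (bounded operator version): Let H be a complex Hilbert space, let A, B be bounded linear operators on H with A self-adjoint, and define ad_A⁰(B) := B and ad_A^{k}(B) := [ad_A^{k−1}(B), A], where [X,Y] = XY − YX. Let n ≥ 1 and let g : ℝ → ℂ be measurable with ∫_ℝ |g(s)|(1+|s|ⁿ) ds < ∞. Set T := ∫_ℝ g(s) e^{isA} ds and, for 1 ≤ k ≤ n−1, T_k := ∫_ℝ g(s) (is)^k e^{isA} ds (Bochner integrals of bounded operators, e^{isA} being the unitary group of A). Then [B, T] = Σ_{k=1}^{n−1} (1/k!) · T_k ∘ ad_A^{k}(B) + R_n, where the remainder satisfies the operator-norm bound ‖R_n‖ ≤ (1/n!) · ‖ad_A^{n}(B)‖ · ∫_ℝ |g(s)| |s|ⁿ ds. -/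

import Mathlib

noncomputable section

open MeasureTheory

/-- Iterated commutator: `adIter A B 0 = B`, `adIter A B (k+1) = [adIter A B k, A]`. -/
def adIter {H : Type*} [NormedAddCommGroup H] [InnerProductSpace ℂ H]
    (A B : H →L[ℂ] H) : ℕ → H →L[ℂ] H
  | 0 => B
  | k + 1 => adIter A B k * A - A * adIter A B k

/-- `e^{isA}`, the exponential of the bounded operator `isA`. -/
def expUnit {H : Type*} [NormedAddCommGroup H] [InnerProductSpace ℂ H] [CompleteSpace H]
    (A : H →L[ℂ] H) (s : ℝ) : H →L[ℂ] H :=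
  NormedSpace.exp (((s : ℂ) * Complex.I) • A)


section Helpers

variable {H : Type*} [NormedAddCommGroup H] [InnerProductSpace ℂ H] [CompleteSpace H]

lemma expUnit_eq (A : H →L[ℂ] H) (s : ℝ) :
    expUnit A s = NormedSpace.exp ((s : ℂ) • (Complex.I • A)) := by
  rw [expUnit, smul_smul]

lemma expUnit_zero (A : H →L[ℂ] H) : expUnit A 0 = 1 := by
  simp [expUnit, NormedSpace.exp_zero]

lemma expUnit_mul_neg (A : H →L[ℂ] H) (s : ℝ) :
    expUnit A s * expUnit A (-s) = 1 := by
  rw [expUnit, expUnit]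
  have hc : Commute (((s:ℂ)*Complex.I) • A) ((((-s : ℝ):ℂ)*Complex.I) • A) :=
    ((Commute.refl A).smul_left _).smul_right _
  let +nondep : NormedAlgebra ℚ (H →L[ℂ] H) := .restrictScalars ℚ ℂ (H →L[ℂ] H)
  rw [← NormedSpace.exp_add_of_commute hc]
  have : ((s:ℂ)*Complex.I) • A + (((-s : ℝ):ℂ)*Complex.I) • A = 0 := by
    push_cast
    rw [← add_smul]
    ring_nf
    simp
  rw [this, NormedSpace.exp_zero]

lemma expUnit_neg_mul (A : H →L[ℂ] H) (s : ℝ) :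
    expUnit A (-s) * expUnit A s = 1 := by
  have := expUnit_mul_neg A (-s); rwa [neg_neg] at this

lemma expUnit_norm_le_one {A : H →L[ℂ] H} (hA : IsSelfAdjoint A) (s : ℝ) :
    ‖expUnit A s‖ ≤ 1 := by
  have hstar : star (expUnit A s) = expUnit A (-s) := by
    rw [expUnit, expUnit, NormedSpace.star_exp, star_smul, hA.star_eq]
    congr 1
    simp only [RCLike.star_def, map_mul, Complex.conj_I, Complex.conj_ofReal]
    push_cast; ring
  have h1 : star (expUnit A s) * expUnit A s = 1 := by
    rw [hstar]; exact expUnit_neg_mul A s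
  have h2 : ‖expUnit A s‖ * ‖expUnit A s‖ ≤ 1 := by
    rw [← CStarRing.norm_star_mul_self, h1, ContinuousLinearMap.one_def]
    exact ContinuousLinearMap.norm_id_le
  nlinarith [norm_nonneg (expUnit A s)]

lemma hasDerivAt_expUnit (A : H →L[ℂ] H) (s : ℝ) :
    HasDerivAt (fun t : ℝ => expUnit A t) (expUnit A s * (Complex.I • A)) s := by
  simp only [expUnit_eq]
  have h1 : HasDerivAt (fun z : ℂ => NormedSpace.exp (z • (Complex.I • A)))
      (NormedSpace.exp ((s:ℂ) • (Complex.I • A)) * (Complex.I • A)) ((s : ℂ)) :=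
    hasDerivAt_exp_smul_const _ _
  have h2 : HasDerivAt (fun t : ℝ => (t : ℂ)) (1 : ℂ) s := by
    simpa using (hasDerivAt_id s).ofReal_comp
  simpa [Function.comp_def] using h1.scomp s h2

lemma commute_smulIA_expUnit (A : H →L[ℂ] H) (s : ℝ) :
    (Complex.I • A) * expUnit A s = expUnit A s * (Complex.I • A) := by
  have : Commute (((s:ℂ)*Complex.I) • A) (Complex.I • A) :=
    ((Commute.refl A).smul_left _).smul_right _
  exact ((this.exp_left).symm).eq


def opChain (A B : H →L[ℂ] H) (k : ℕ) (s : ℝ) : H →L[ℂ] H :=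
  Complex.I ^ k • (expUnit A (-s) * adIter A B k * expUnit A s)

lemma hasDerivAt_opChain (A B : H →L[ℂ] H) (k : ℕ) (s : ℝ) :
    HasDerivAt (opChain A B k) (opChain A B (k + 1) s) s := by
  have hu : HasDerivAt (fun t : ℝ => expUnit A (-t)) (-(expUnit A (-s) * (Complex.I • A))) s := by
    have := (hasDerivAt_expUnit A (-s)).scomp s (hasDerivAt_neg s)
    simpa [Function.comp_def, mul_smul_comm] using this
  have hv := hasDerivAt_expUnit A s
  have h := ((hu.mul_const (adIter A B k)).mul hv).const_smul (Complex.I ^ k)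
  have key : Complex.I ^ k • (-(expUnit A (-s) * (Complex.I • A)) * adIter A B k * expUnit A s
      + expUnit A (-s) * adIter A B k * (expUnit A s * (Complex.I • A)))
      = opChain A B (k + 1) s := by
    rw [← commute_smulIA_expUnit A s]
    have inner : -(expUnit A (-s) * (Complex.I • A)) * adIter A B k * expUnit A s
        + expUnit A (-s) * adIter A B k * (Complex.I • A * expUnit A s)
        = Complex.I • (expUnit A (-s) * (adIter A B k * A - A * adIter A B k) * expUnit A s) := by
      simp only [smul_mul_assoc, mul_smul_comm, neg_mul, smul_neg, mul_sub, sub_mul, smul_sub,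
        mul_assoc]
      abel
    rw [inner, opChain, smul_smul, ← pow_succ]
    rfl
  exact key ▸ h

lemma norm_opChain_le {A : H →L[ℂ] H} (hA : IsSelfAdjoint A) (B : H →L[ℂ] H) (k : ℕ) (s : ℝ) :
    ‖opChain A B k s‖ ≤ ‖adIter A B k‖ := by
  rw [opChain, norm_smul]
  have h1 : ‖Complex.I ^ k‖ = 1 := by
    rw [norm_pow, Complex.norm_I, one_pow]
  rw [h1, one_mul]
  have h2 := norm_mul_le (expUnit A (-s) * adIter A B k) (expUnit A s)
  have h3 := norm_mul_le (expUnit A (-s)) (adIter A B k)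
  have e1 := expUnit_norm_le_one hA s
  have e2 := expUnit_norm_le_one hA (-s)
  nlinarith [norm_nonneg (adIter A B k), norm_nonneg (expUnit A s),
    norm_nonneg (expUnit A (-s)), norm_nonneg (expUnit A (-s) * adIter A B k)]

-- Taylor machinery (abstract)
variable {E : Type*} [NormedAddCommGroup E] [NormedSpace ℝ E]

lemma bound_aux (r r' : ℝ → E) (hd : ∀ t, HasDerivAt r (r' t) t) (h0 : r 0 = 0)
    (C : ℝ) (m : ℕ) (hb : ∀ t, ‖r' t‖ ≤ C * |t| ^ m / m.factorial)
    {s : ℝ} (hs : 0 ≤ s) :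
    ‖r s‖ ≤ C * s ^ (m + 1) / (m + 1).factorial := by
  have hfac : ((m + 1).factorial : ℝ) = (m + 1) * m.factorial := by
    rw [Nat.factorial_succ]; push_cast; ring
  have hfm : (0 : ℝ) < m.factorial := by positivity
  have hB : ∀ x : ℝ, HasDerivAt (fun t : ℝ => C * t ^ (m + 1) / ((m + 1).factorial : ℝ))
      (C * x ^ m / m.factorial) x := by
    intro x
    have := ((hasDerivAt_pow (m + 1) x).const_mul C).div_const ((m + 1).factorial : ℝ)
    refine this.congr_deriv ?_
    rw [hfac]
    field_simp
    rw [Nat.add_sub_cancel]; push_cast; ring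
  have key := image_norm_le_of_norm_deriv_right_le_deriv_boundary
    (f := r) (f' := r') (a := 0) (b := s)
    (B := fun t : ℝ => C * t ^ (m + 1) / ((m + 1).factorial : ℝ))
    (B' := fun t : ℝ => C * t ^ m / m.factorial)
    (fun x _ => (hd x).continuousAt.continuousWithinAt)
    (fun x _ => (hd x).hasDerivWithinAt)
    (by simp [h0]) hB
    (fun x hx => by
      have := hb x
      rwa [abs_of_nonneg hx.1] at this)
  exact key (Set.right_mem_Icc.2 hs)

lemma bound_from_deriv (r r' : ℝ → E) (hd : ∀ t, HasDerivAt r (r' t) t) (h0 : r 0 = 0)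
    (C : ℝ) (m : ℕ) (hb : ∀ t, ‖r' t‖ ≤ C * |t| ^ m / m.factorial) (s : ℝ) :
    ‖r s‖ ≤ C * |s| ^ (m + 1) / (m + 1).factorial := by
  rcases le_or_gt 0 s with hs | hs
  · rw [abs_of_nonneg hs]; exact bound_aux r r' hd h0 C m hb hs
  · have hd' : ∀ t, HasDerivAt (fun t : ℝ => r (-t)) ((-1 : ℝ) • r' (-t)) t := fun t => by
      simpa [Function.comp_def] using (hd (-t)).scomp t (hasDerivAt_neg t)
    have hb' : ∀ t, ‖(-1 : ℝ) • r' (-t)‖ ≤ C * |t| ^ m / m.factorial := fun t => by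
      rw [neg_one_smul, norm_neg]
      simpa [abs_neg] using hb (-t)
    have := bound_aux (fun t => r (-t)) (fun t => (-1 : ℝ) • r' (-t)) hd'
      (by simpa using h0) C m hb' (s := -s) (by linarith)
    rw [abs_of_neg hs]
    simpa using this

lemma taylor_chain : ∀ (n : ℕ) (fc : ℕ → ℝ → E),
    (∀ k < n, ∀ t, HasDerivAt (fc k) (fc (k + 1) t) t) →
    ∀ (C : ℝ), (∀ t, ‖fc n t‖ ≤ C) →
    ∀ s : ℝ, ‖fc 0 s - ∑ k ∈ Finset.range n, ((s ^ k / k.factorial : ℝ)) • fc k 0‖ ≤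
      C * |s| ^ n / n.factorial := by
  intro n
  induction n with
  | zero => intro fc _ C hC s; simpa using hC s
  | succ n ih =>
    intro fc hderiv C hC s
    set r : ℝ → E := fun t =>
      fc 0 t - ∑ k ∈ Finset.range (n + 1), ((t ^ k / k.factorial : ℝ)) • fc k 0 with hr
    set r' : ℝ → E := fun t =>
      fc 1 t - ∑ k ∈ Finset.range n, ((t ^ k / k.factorial : ℝ)) • fc (k + 1) 0 with hr'
    have hd : ∀ t, HasDerivAt r (r' t) t := by
      intro t
      have hsum : HasDerivAt (fun t : ℝ => ∑ k ∈ Finset.range (n + 1),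
          ((t ^ k / k.factorial : ℝ)) • fc k 0)
          (∑ k ∈ Finset.range (n + 1), ((k * t ^ (k - 1) / k.factorial : ℝ)) • fc k 0) t := by
        apply HasDerivAt.fun_sum
        intro k _
        exact (((hasDerivAt_pow k t).div_const (k.factorial : ℝ)).smul_const (fc k 0))
      have hre : (∑ k ∈ Finset.range (n + 1), ((k * t ^ (k - 1) / k.factorial : ℝ)) • fc k 0)
          = ∑ k ∈ Finset.range n, ((t ^ k / k.factorial : ℝ)) • fc (k + 1) 0 := by
        rw [Finset.sum_range_succ']
        simp only [Nat.cast_zero, zero_mul, zero_div, zero_smul, add_zero]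
        refine Finset.sum_congr rfl fun k _ => ?_
        congr 1
        rw [Nat.factorial_succ]
        push_cast
        have : (k.factorial : ℝ) ≠ 0 := by positivity
        field_simp
      have := (hderiv 0 (Nat.succ_pos n) t).sub (hre ▸ hsum)
      exact this
    have h0 : r 0 = 0 := by
      rw [hr]
      simp only
      rw [Finset.sum_eq_single 0]
      · simp
      · intro k _ hk
        rcases Nat.exists_eq_succ_of_ne_zero hk with ⟨j, rfl⟩
        simp [zero_pow]
      · simp
    have hb : ∀ t, ‖r' t‖ ≤ C * |t| ^ n / n.factorial := by
      intro t
      have := ih (fun k => fc (k + 1)) (fun k hk t => hderiv (k + 1) (by omega) t) C hC t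
      simpa using this
    have := bound_from_deriv r r' hd h0 C n hb s
    simpa [hr] using this

lemma opChain_zero_eval (A B : H →L[ℂ] H) (k : ℕ) :
    opChain A B k 0 = Complex.I ^ k • adIter A B k := by
  rw [opChain, neg_zero, expUnit_zero]
  simp

lemma coe_smul_op (r : ℝ) (X : H →L[ℂ] H) : (r : ℂ) • X = r • X := by
  rw [← Complex.coe_algebraMap, algebraMap_smul]

lemma pointwise_remainder {A : H →L[ℂ] H} (hA : IsSelfAdjoint A) (B : H →L[ℂ] H)
    {n : ℕ} (hn : 1 ≤ n) (s : ℝ) :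
    ‖B * expUnit A s - expUnit A s * B - ∑ k ∈ Finset.Ico 1 n, ((k.factorial : ℂ))⁻¹ •
        (((Complex.I * (s : ℂ)) ^ k) • (expUnit A s * adIter A B k))‖ ≤
      ‖adIter A B n‖ * |s| ^ n / n.factorial := by
  have hΔ := taylor_chain n (opChain A B) (fun k _ t => hasDerivAt_opChain A B k t)
    (‖adIter A B n‖) (fun t => norm_opChain_le hA B n t) s
  set Δ := opChain A B 0 s - ∑ k ∈ Finset.range n, ((s ^ k / k.factorial : ℝ)) • opChain A B k 0
    with hΔdef
  have h0 : expUnit A s * opChain A B 0 s = B * expUnit A s := by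
    rw [opChain]
    simp only [pow_zero, one_smul]
    rw [← mul_assoc, ← mul_assoc, expUnit_mul_neg]
    simp [adIter]
  have hk : ∀ k : ℕ, expUnit A s * (((s ^ k / k.factorial : ℝ)) • opChain A B k 0)
      = ((k.factorial : ℂ))⁻¹ • (((Complex.I * (s : ℂ)) ^ k) • (expUnit A s * adIter A B k)) := by
    intro k
    rw [opChain_zero_eval, ← coe_smul_op, mul_smul_comm, mul_smul_comm, smul_smul, smul_smul]
    congr 1
    push_cast
    have hf : ((k.factorial : ℂ)) ≠ 0 := by
      exact_mod_cast Nat.cast_ne_zero.2 k.factorial_ne_zero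
    field_simp
    ring
  have hfac : expUnit A s * Δ = B * expUnit A s - expUnit A s * B -
      ∑ k ∈ Finset.Ico 1 n, ((k.factorial : ℂ))⁻¹ •
        (((Complex.I * (s : ℂ)) ^ k) • (expUnit A s * adIter A B k)) := by
    rw [hΔdef, mul_sub, Finset.mul_sum, h0, Finset.range_eq_Ico,
      Finset.sum_eq_sum_Ico_succ_bot (show 0 < n by omega)]
    have hf0 : expUnit A s * ((s ^ 0 / ((0:ℕ).factorial : ℝ)) • opChain A B 0 0)
        = expUnit A s * B := by
      simp [opChain_zero_eval, adIter]
    rw [hf0, Finset.sum_congr rfl (fun k _ => hk k), sub_sub]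
  rw [← hfac]
  calc ‖expUnit A s * Δ‖ ≤ ‖expUnit A s‖ * ‖Δ‖ := norm_mul_le _ _
    _ ≤ 1 * ‖Δ‖ := by
        have := expUnit_norm_le_one hA s
        have := norm_nonneg Δ
        nlinarith
    _ ≤ ‖adIter A B n‖ * |s| ^ n / n.factorial := by rw [one_mul]; exact hΔ


def rho (A B : H →L[ℂ] H) (n : ℕ) (s : ℝ) : H →L[ℂ] H :=
  B * expUnit A s - expUnit A s * B - ∑ k ∈ Finset.Ico 1 n, ((k.factorial : ℂ))⁻¹ •
    (((Complex.I * (s : ℂ)) ^ k) • (expUnit A s * adIter A B k))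

lemma norm_rho_le {A : H →L[ℂ] H} (hA : IsSelfAdjoint A) (B : H →L[ℂ] H)
    {n : ℕ} (hn : 1 ≤ n) (s : ℝ) :
    ‖rho A B n s‖ ≤ ‖adIter A B n‖ * |s| ^ n / n.factorial :=
  pointwise_remainder hA B hn s


end Helpers

set_option maxHeartbeats 1000000 in
/-- Commutator expansion with remainder bound (bounded operator version):
`[B, T] = Σ_{k=1}^{n−1} (1/k!)·T_k ∘ ad_A^k(B) + R_n` with
`‖R_n‖ ≤ (1/n!)·‖ad_A^n(B)‖·∫|g(s)||s|ⁿ ds`, where `T = ∫ g(s)e^{isA} ds` and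
`T_k = ∫ g(s)(is)^k e^{isA} ds`. -/
theorem commutator_expansion_bounded
    {H : Type*} [NormedAddCommGroup H] [InnerProductSpace ℂ H] [CompleteSpace H]
    (A B : H →L[ℂ] H) (hA : IsSelfAdjoint A)
    (n : ℕ) (hn : 1 ≤ n) (g : ℝ → ℂ)
    (hg : Integrable fun s : ℝ => ‖g s‖ * (1 + |s| ^ n)) :
    ∃ Rn : H →L[ℂ] H,
      B * (∫ s : ℝ, g s • expUnit A s) - (∫ s : ℝ, g s • expUnit A s) * B =
        (∑ k ∈ Finset.Ico 1 n, ((k.factorial : ℂ))⁻¹ •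
          ((∫ s : ℝ, ((Complex.I * (s : ℂ)) ^ k * g s) • expUnit A s) * adIter A B k)) + Rn ∧
      ‖Rn‖ ≤ ((n.factorial : ℝ))⁻¹ * ‖adIter A B n‖ * ∫ s : ℝ, ‖g s‖ * |s| ^ n := by
  classical
  have hnn : ∀ s : ℝ, (0:ℝ) ≤ ‖g s‖ * |s| ^ n := fun s => by positivity
  have hpow : ∀ (k : ℕ), k ≤ n → ∀ s : ℝ, |s| ^ k ≤ 1 + |s| ^ n := by
    intro k hk s
    rcases le_or_gt (|s|) 1 with hs | hs
    · have : |s| ^ k ≤ 1 := pow_le_one₀ (abs_nonneg s) hs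
      nlinarith [pow_nonneg (abs_nonneg s) n]
    · have : |s| ^ k ≤ |s| ^ n := pow_le_pow_right₀ (le_of_lt hs) hk
      linarith
  have hnormFk : ∀ (k : ℕ) (s : ℝ), ‖((Complex.I * (s : ℂ)) ^ k * g s) • expUnit A s‖
      ≤ |s| ^ k * ‖g s‖ := by
    intro k s
    rw [norm_smul, norm_mul, norm_pow, norm_mul, Complex.norm_I, one_mul, Complex.norm_real,
      Real.norm_eq_abs]
    have h1 : ‖expUnit A s‖ ≤ 1 := expUnit_norm_le_one hA s
    have h2 : (0:ℝ) ≤ |s| ^ k * ‖g s‖ := by positivity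
    nlinarith [norm_nonneg (g s)]
  by_cases hP : AEStronglyMeasurable (fun s : ℝ => g s • expUnit A s) volume
  case neg =>
    have hae : ∀ᵐ s : ℝ, s ≠ (0:ℝ) := by
      have hset : {a : ℝ | ¬ a ≠ 0} = {0} := by ext a; simp
      rw [ae_iff, hset]
      exact Real.volume_singleton
    have hTk0 : ∀ k : ℕ, 1 ≤ k →
        (∫ s : ℝ, ((Complex.I * (s : ℂ)) ^ k * g s) • expUnit A s) = 0 := by
      intro k hk
      apply integral_undef
      intro hint
      apply hP
      have hc : AEStronglyMeasurable (fun s : ℝ => (((Complex.I * (s : ℂ)) ^ k)⁻¹)) volume := by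
        apply Measurable.aestronglyMeasurable
        exact ((measurable_const.mul Complex.measurable_ofReal).pow_const k).inv
      have haesm := hc.smul hint.aestronglyMeasurable
      apply haesm.congr
      filter_upwards [hae] with s hs
      have hz : (Complex.I * (s : ℂ)) ^ k ≠ 0 := by
        apply pow_ne_zero
        simp [Complex.ofReal_eq_zero, hs, Complex.I_ne_zero]
      show ((Complex.I * (s:ℂ)) ^ k)⁻¹ • (((Complex.I * (s : ℂ)) ^ k * g s) • expUnit A s) = g s • expUnit A s
      rw [smul_smul, ← mul_assoc, inv_mul_cancel₀ hz, one_mul]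
    have hT0 : (∫ s : ℝ, g s • expUnit A s) = 0 := by
      apply integral_undef
      intro hint
      exact hP hint.aestronglyMeasurable
    refine ⟨0, ?_, ?_⟩
    · rw [hT0]
      have hz : ∀ k ∈ Finset.Ico 1 n, ((k.factorial : ℂ))⁻¹ •
          ((∫ s : ℝ, ((Complex.I * (s : ℂ)) ^ k * g s) • expUnit A s) * adIter A B k) = 0 := by
        intro k hk
        rw [hTk0 k (Finset.mem_Ico.1 hk).1]
        simp
      rw [Finset.sum_eq_zero hz]
      simp
    · rw [norm_zero]
      have : (0:ℝ) ≤ ∫ s : ℝ, ‖g s‖ * |s| ^ n := integral_nonneg hnn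
      positivity
  case pos =>
    have hIv : Integrable (fun s : ℝ => g s • expUnit A s) := by
      refine hg.mono' hP (ae_of_all _ fun s => ?_)
      rw [norm_smul]
      have h1 := expUnit_norm_le_one hA s
      have h2 := pow_nonneg (abs_nonneg s) n
      nlinarith [norm_nonneg (g s)]
    have hAk : ∀ k : ℕ, AEStronglyMeasurable
        (fun s : ℝ => ((Complex.I * (s : ℂ)) ^ k * g s) • expUnit A s) volume := by
      intro k
      have hc : AEStronglyMeasurable (fun s : ℝ => (Complex.I * (s : ℂ)) ^ k) volume :=
        ((measurable_const.mul Complex.measurable_ofReal).pow_const k).aestronglyMeasurable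
      refine (hc.smul hP).congr (Filter.Eventually.of_forall fun s => ?_)
      simp only [Pi.smul_apply', smul_smul]
    have hIk : ∀ k : ℕ, k ≤ n →
        Integrable (fun s : ℝ => ((Complex.I * (s : ℂ)) ^ k * g s) • expUnit A s) := by
      intro k hk
      refine hg.mono' (hAk k) (ae_of_all _ fun s => ?_)
      calc ‖((Complex.I * (s : ℂ)) ^ k * g s) • expUnit A s‖ ≤ |s| ^ k * ‖g s‖ := hnormFk k s
        _ ≤ ‖g s‖ * (1 + |s| ^ n) := by nlinarith [hpow k hk s, norm_nonneg (g s)]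
    have hsplit : ∀ s : ℝ, B * (g s • expUnit A s) - (g s • expUnit A s) * B =
        (∑ k ∈ Finset.Ico 1 n, ((k.factorial : ℂ))⁻¹ •
          ((((Complex.I * (s : ℂ)) ^ k * g s) • expUnit A s) * adIter A B k)) +
          g s • rho A B n s := by
      intro s
      have e1 : B * (g s • expUnit A s) = g s • (B * expUnit A s) := (mul_smul_comm _ _ _)
      have e2 : (g s • expUnit A s) * B = g s • (expUnit A s * B) := (smul_mul_assoc _ _ _)
      rw [e1, e2, ← smul_sub]
      have e3 : B * expUnit A s - expUnit A s * B =
          (∑ k ∈ Finset.Ico 1 n, ((k.factorial : ℂ))⁻¹ •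
            (((Complex.I * (s : ℂ)) ^ k) • (expUnit A s * adIter A B k))) + rho A B n s := by
        rw [rho]; abel
      rw [e3, smul_add, Finset.smul_sum]
      congr 1
      refine Finset.sum_congr rfl fun k _ => ?_
      rw [smul_mul_assoc, smul_smul, smul_smul, smul_smul]
      congr 1
      ring
    have hIrho : Integrable (fun s : ℝ => g s • rho A B n s) := by
      have haesm : AEStronglyMeasurable (fun s : ℝ => g s • rho A B n s) volume := by
        have heq : (fun s : ℝ => g s • rho A B n s) = fun s : ℝ =>
            (B * (g s • expUnit A s) - (g s • expUnit A s) * B) -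
            ∑ k ∈ Finset.Ico 1 n, ((k.factorial : ℂ))⁻¹ •
              ((((Complex.I * (s : ℂ)) ^ k * g s) • expUnit A s) * adIter A B k) := by
          funext s
          rw [hsplit s]
          abel
        rw [heq]
        apply AEStronglyMeasurable.sub
        · exact (hP.const_mul B).sub (hP.mul_const B)
        · apply Finset.aestronglyMeasurable_fun_sum
          intro k _
          exact ((hAk k).mul_const (adIter A B k)).const_smul' _
      refine (hg.const_mul (((n.factorial : ℝ))⁻¹ * ‖adIter A B n‖)).mono' haesm
        (ae_of_all _ fun s => ?_)
      rw [norm_smul]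
      have h1 := norm_rho_le hA B hn s
      rw [div_eq_mul_inv] at h1
      have hc : (0:ℝ) < (n.factorial : ℝ) := by positivity
      have hci : (0:ℝ) ≤ ((n.factorial : ℝ))⁻¹ := by positivity
      have h2 := mul_le_mul_of_nonneg_left h1 (norm_nonneg (g s))
      have h3 : ((n.factorial : ℝ))⁻¹ * ‖adIter A B n‖ * (‖g s‖ * |s| ^ n)
          ≤ ((n.factorial : ℝ))⁻¹ * ‖adIter A B n‖ * (‖g s‖ * (1 + |s| ^ n)) := by
        have h4 : ‖g s‖ * |s| ^ n ≤ ‖g s‖ * (1 + |s| ^ n) := by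
          nlinarith [norm_nonneg (g s)]
        have h5 : (0:ℝ) ≤ ((n.factorial : ℝ))⁻¹ * ‖adIter A B n‖ := by positivity
        nlinarith
      calc ‖g s‖ * ‖rho A B n s‖ ≤ ‖g s‖ * (‖adIter A B n‖ * |s| ^ n * ((n.factorial:ℝ))⁻¹) := h2
        _ = ((n.factorial : ℝ))⁻¹ * ‖adIter A B n‖ * (‖g s‖ * |s| ^ n) := by ring
        _ ≤ ((n.factorial : ℝ))⁻¹ * ‖adIter A B n‖ * (‖g s‖ * (1 + |s| ^ n)) := h3
    have hgInt_n : Integrable (fun s : ℝ => ‖g s‖ * |s| ^ n) := by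
      have haesm : AEStronglyMeasurable (fun s : ℝ => ‖g s‖ * |s| ^ n) volume := by
        have h1 := hg.aestronglyMeasurable
        have h2 : Continuous (fun s : ℝ => |s| ^ n / (1 + |s| ^ n)) := by
          apply Continuous.div
          · exact (continuous_abs.pow n)
          · exact continuous_const.add (continuous_abs.pow n)
          · intro s
            have := pow_nonneg (abs_nonneg s) n
            positivity
        refine (h1.mul h2.aestronglyMeasurable).congr (Filter.Eventually.of_forall fun s => ?_)
        have h3 : (0:ℝ) < 1 + |s| ^ n := by positivity
        show ‖g s‖ * (1 + |s| ^ n) * (|s| ^ n / (1 + |s| ^ n)) = ‖g s‖ * |s| ^ n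
        field_simp
      refine hg.mono' haesm (ae_of_all _ fun s => ?_)
      rw [Real.norm_of_nonneg (hnn s)]
      nlinarith [norm_nonneg (g s), pow_nonneg (abs_nonneg s) n]
    -- the integral equalities
    have hBT : B * (∫ s : ℝ, g s • expUnit A s) = ∫ s : ℝ, B * (g s • expUnit A s) :=
      ((ContinuousLinearMap.mul ℂ (H →L[ℂ] H) B).integral_comp_comm hIv).symm
    have hTB : (∫ s : ℝ, g s • expUnit A s) * B = ∫ s : ℝ, (g s • expUnit A s) * B :=
      (((ContinuousLinearMap.mul ℂ (H →L[ℂ] H)).flip B).integral_comp_comm hIv).symm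
    have hIBh : Integrable (fun s : ℝ => B * (g s • expUnit A s)) :=
      (ContinuousLinearMap.mul ℂ (H →L[ℂ] H) B).integrable_comp hIv
    have hIhB : Integrable (fun s : ℝ => (g s • expUnit A s) * B) :=
      ((ContinuousLinearMap.mul ℂ (H →L[ℂ] H)).flip B).integrable_comp hIv
    have hItermk : ∀ k ∈ Finset.Ico 1 n, Integrable (fun s : ℝ => ((k.factorial : ℂ))⁻¹ •
        ((((Complex.I * (s : ℂ)) ^ k * g s) • expUnit A s) * adIter A B k)) := by
      intro k hk
      have := ((ContinuousLinearMap.mul ℂ (H →L[ℂ] H)).flip (adIter A B k)).integrable_comp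
        (hIk k (le_of_lt (Finset.mem_Ico.1 hk).2))
      exact this.smul ((k.factorial : ℂ))⁻¹
    have hkey : B * (∫ s : ℝ, g s • expUnit A s) - (∫ s : ℝ, g s • expUnit A s) * B =
        (∑ k ∈ Finset.Ico 1 n, ∫ s : ℝ, ((k.factorial : ℂ))⁻¹ •
          ((((Complex.I * (s : ℂ)) ^ k * g s) • expUnit A s) * adIter A B k)) +
        ∫ s : ℝ, g s • rho A B n s := by
      rw [hBT, hTB, ← integral_sub hIBh hIhB]
      rw [integral_congr_ae (ae_of_all _ hsplit)]
      rw [integral_add (integrable_finset_sum _ hItermk) hIrho]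
      rw [integral_finset_sum _ hItermk]
    have hTk : ∀ k ∈ Finset.Ico 1 n, (∫ s : ℝ, ((k.factorial : ℂ))⁻¹ •
        ((((Complex.I * (s : ℂ)) ^ k * g s) • expUnit A s) * adIter A B k)) =
        ((k.factorial : ℂ))⁻¹ •
          ((∫ s : ℝ, ((Complex.I * (s : ℂ)) ^ k * g s) • expUnit A s) * adIter A B k) := by
      intro k hk
      rw [integral_smul]
      congr 1
      exact ((ContinuousLinearMap.mul ℂ (H →L[ℂ] H)).flip (adIter A B k)).integral_comp_comm
        (hIk k (le_of_lt (Finset.mem_Ico.1 hk).2))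
    refine ⟨∫ s : ℝ, g s • rho A B n s, ?_, ?_⟩
    · rw [hkey]
      congr 1
      exact Finset.sum_congr rfl hTk
    · have hbnd : ∀ s : ℝ, ‖g s • rho A B n s‖ ≤
          ((n.factorial : ℝ))⁻¹ * ‖adIter A B n‖ * (‖g s‖ * |s| ^ n) := by
        intro s
        rw [norm_smul]
        have h1 := norm_rho_le hA B hn s
        have h2 := mul_le_mul_of_nonneg_left h1 (norm_nonneg (g s))
        calc ‖g s‖ * ‖rho A B n s‖ ≤ ‖g s‖ * (‖adIter A B n‖ * |s| ^ n / n.factorial) := h2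
          _ = ((n.factorial : ℝ))⁻¹ * ‖adIter A B n‖ * (‖g s‖ * |s| ^ n) := by
              rw [div_eq_mul_inv]; ring
      calc ‖∫ s : ℝ, g s • rho A B n s‖
          ≤ ∫ s : ℝ, ((n.factorial : ℝ))⁻¹ * ‖adIter A B n‖ * (‖g s‖ * |s| ^ n) :=
            norm_integral_le_of_norm_le (hgInt_n.const_mul _) (ae_of_all _ hbnd)
        _ = ((n.factorial : ℝ))⁻¹ * ‖adIter A B n‖ * ∫ s : ℝ, ‖g s‖ * |s| ^ n := by
            rw [integral_const_mul]
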